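/- In the fixed-design model, assume σ_k(A) > σ_{k+1}(A), let R ∈ ℝ^{d×s} with s ≥ k and rank(AR) ≥ k, and suppose d₂(U_{AR,k}, U_{A,k}) ≤ ν < 1. Then the excess risk satisfies 𝔈(x_{R,k}) ≤ 𝔈(x_k) + (2ν + ν²)·‖f‖₂²/n. -/

import Mathlib

open Matrix MeasureTheory

noncomputable section

/-- Euclidean norm of a vector in `ℝ^n`. -/
def vnorm {n : ℕ} (v : Fin n → ℝ) : ℝ := Real.sqrt (∑ i, v i ^ 2)

/-- Spectral norm of a matrix (operator norm as a map between Euclidean spaces). -/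
def spec {m n : ℕ} (M : Matrix (Fin m) (Fin n) ℝ) : ℝ :=
  ‖LinearMap.toContinuousLinearMap (Matrix.toEuclideanLin M)‖

/-- The four Moore-Penrose conditions. -/
def IsMP {m n : ℕ} (X : Matrix (Fin m) (Fin n) ℝ) (Y : Matrix (Fin n) (Fin m) ℝ) : Prop :=
  X * Y * X = X ∧ Y * X * Y = Y ∧ (X * Y)ᵀ = X * Y ∧ (Y * X)ᵀ = Y * X

/-- The Moore-Penrose pseudoinverse (it always exists and is unique, so this choice-based
definition picks out exactly the Moore-Penrose pseudoinverse). -/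
def pinv {m n : ℕ} (X : Matrix (Fin m) (Fin n) ℝ) : Matrix (Fin n) (Fin m) ℝ := by
  classical exact if h : ∃ Y, IsMP X Y then h.choose else 0

/-- Orthogonal projection onto the column space of a matrix: `P_X = X X⁺`. -/
def projCol {m n : ℕ} (X : Matrix (Fin m) (Fin n) ℝ) : Matrix (Fin m) (Fin m) ℝ := X * pinv X

/-- Distance between column spaces: `d₂(U, W) = ‖P_U - P_W‖₂`. -/
def d2 {m p q : ℕ} (U : Matrix (Fin m) (Fin p) ℝ) (W : Matrix (Fin m) (Fin q) ℝ) : ℝ :=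
  spec (projCol U - projCol W)

/-- `(U, s, V)` is a thin SVD of `X`: orthonormal columns, nonincreasing nonnegative
singular values, and `X = U (diag s) Vᵀ`. -/
def IsThinSVD {m n p : ℕ} (X : Matrix (Fin m) (Fin n) ℝ) (U : Matrix (Fin m) (Fin p) ℝ)
    (s : Fin p → ℝ) (V : Matrix (Fin n) (Fin p) ℝ) : Prop :=
  Uᵀ * U = 1 ∧ Vᵀ * V = 1 ∧ Antitone s ∧ (∀ i, 0 ≤ s i) ∧ X = U * Matrix.diagonal s * Vᵀ

/-- The matrix of the first `k` columns. -/
def firstCols {m p : ℕ} (U : Matrix (Fin m) (Fin p) ℝ) (k : ℕ) (h : k ≤ p) :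
    Matrix (Fin m) (Fin k) ℝ := U.submatrix id (Fin.castLE h)

/-- The matrix of the remaining columns (columns `k+1, …, p` in 1-based indexing). -/
def tailCols {m p : ℕ} (U : Matrix (Fin m) (Fin p) ℝ) (k : ℕ) (h : k ≤ p) :
    Matrix (Fin m) (Fin (p - k)) ℝ :=
  U.submatrix id (fun j => ⟨k + j.1, by have := j.2; omega⟩)

/-- `sv s i` is the `i`-th singular value (1-indexed), `0` past the end. -/
def sv {p : ℕ} (s : Fin p → ℝ) (i : ℕ) : ℝ := by
  classical exact if h : i - 1 < p then s ⟨i - 1, h⟩ else 0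

end


lemma mp_unique {m n : ℕ} {X : Matrix (Fin m) (Fin n) ℝ} {Y Z : Matrix (Fin n) (Fin m) ℝ}
    (hY : IsMP X Y) (hZ : IsMP X Z) : Y = Z := by
  obtain ⟨hY1, hY2, hY3, hY4⟩ := hY
  obtain ⟨hZ1, hZ2, hZ3, hZ4⟩ := hZ
  have t1 : X * Y * (X * Z) = X * Z := by
    rw [← Matrix.mul_assoc, Matrix.mul_assoc X Y X, ← Matrix.mul_assoc, hY1]
  have t2 : X * Y * (X * Z) = X * Y := by
    rw [← hY3, ← hZ3, ← Matrix.transpose_mul, ← Matrix.mul_assoc, Matrix.mul_assoc X Z X,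
      ← Matrix.mul_assoc, hZ1, hY3]
  have hXY : X * Y = X * Z := t2.symm.trans t1
  have t1' : Z * X * (Y * X) = Z * X := by
    rw [Matrix.mul_assoc, ← Matrix.mul_assoc X Y X, hY1]
  have t2' : Z * X * (Y * X) = Y * X := by
    rw [← hZ4, ← hY4, ← Matrix.transpose_mul, Matrix.mul_assoc, ← Matrix.mul_assoc X Z X, hZ1, hY4]
  have hYX : Y * X = Z * X := t2'.symm.trans t1'
  calc Y = Y * X * Y := hY2.symm
  _ = Y * (X * Z) := by rw [Matrix.mul_assoc, hXY]
  _ = Z * X * Z := by rw [← Matrix.mul_assoc, hYX]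
  _ = Z := hZ2

lemma pinv_eq {m n : ℕ} {X : Matrix (Fin m) (Fin n) ℝ} {Y : Matrix (Fin n) (Fin m) ℝ}
    (h : IsMP X Y) : pinv X = Y := by
  have hex : ∃ Y, IsMP X Y := ⟨Y, h⟩
  unfold pinv
  rw [dif_pos hex]
  exact mp_unique hex.choose_spec h

lemma vnorm_nonneg {n : ℕ} (v : Fin n → ℝ) : 0 ≤ vnorm v := Real.sqrt_nonneg _

lemma vnorm_sq {n : ℕ} (v : Fin n → ℝ) : vnorm v ^ 2 = ∑ i, v i ^ 2 :=
  Real.sq_sqrt (Finset.sum_nonneg fun i _ => sq_nonneg _)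

lemma vnorm_eq {n : ℕ} (v : Fin n → ℝ) :
    vnorm v = ‖(WithLp.equiv 2 (Fin n → ℝ)).symm v‖ := by
  rw [EuclideanSpace.norm_eq]
  simp [vnorm, sq_abs]

lemma vnorm_le_of_sq_le {n : ℕ} {u v : Fin n → ℝ} (h : ∑ i, u i ^ 2 ≤ ∑ i, v i ^ 2) :
    vnorm u ≤ vnorm v := Real.sqrt_le_sqrt h

lemma vnorm_add_le {n : ℕ} (u v : Fin n → ℝ) : vnorm (u + v) ≤ vnorm u + vnorm v := by
  rw [vnorm_eq, vnorm_eq, vnorm_eq]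
  have h : (WithLp.equiv 2 (Fin n → ℝ)).symm (u + v)
      = (WithLp.equiv 2 (Fin n → ℝ)).symm u + (WithLp.equiv 2 (Fin n → ℝ)).symm v := rfl
  rw [h]
  exact norm_add_le _ _

lemma spec_nonneg {m n : ℕ} (M : Matrix (Fin m) (Fin n) ℝ) : 0 ≤ spec M := norm_nonneg _

lemma vnorm_mulVec_le {m n : ℕ} (M : Matrix (Fin m) (Fin n) ℝ) (v : Fin n → ℝ) :
    vnorm (M.mulVec v) ≤ spec M * vnorm v := by
  rw [vnorm_eq, vnorm_eq]
  have h := (LinearMap.toContinuousLinearMap (Matrix.toEuclideanLin M)).le_opNorm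
    ((WithLp.equiv 2 (Fin n → ℝ)).symm v)
  simpa [spec] using h

lemma proj_key {n : ℕ} (P : Matrix (Fin n) (Fin n) ℝ) (hsym : Pᵀ = P) (hidem : P * P = P)
    (v : Fin n → ℝ) : ∑ i, P.mulVec v i * P.mulVec v i = ∑ i, P.mulVec v i * v i := by
  have h : (P.mulVec v) ⬝ᵥ (P.mulVec v) = (P.mulVec v) ⬝ᵥ v := by
    rw [Matrix.dotProduct_mulVec]
    rw [← Matrix.mulVec_transpose, hsym, Matrix.mulVec_mulVec, hidem]
  simpa [dotProduct] using h

lemma sum_sq_expand {n : ℕ} (v u : Fin n → ℝ) :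
    ∑ i, (v i - u i) ^ 2 = ∑ i, v i ^ 2 - 2 * ∑ i, (u i * v i) + ∑ i, u i * u i := by
  rw [Finset.mul_sum, ← Finset.sum_sub_distrib, ← Finset.sum_add_distrib]
  exact Finset.sum_congr rfl fun i _ => by ring

lemma proj_mulVec_le {n : ℕ} (P : Matrix (Fin n) (Fin n) ℝ) (hsym : Pᵀ = P)
    (hidem : P * P = P) (v : Fin n → ℝ) : vnorm (P.mulVec v) ≤ vnorm v := by
  apply vnorm_le_of_sq_le
  have key := proj_key P hsym hidem v
  have h0 : (0:ℝ) ≤ ∑ i, (v i - P.mulVec v i) ^ 2 := Finset.sum_nonneg fun i _ => sq_nonneg _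
  have hexp := sum_sq_expand v (P.mulVec v)
  have hsq : ∑ i, P.mulVec v i ^ 2 = ∑ i, P.mulVec v i * P.mulVec v i := by
    exact Finset.sum_congr rfl fun i _ => sq (P.mulVec v i) ▸ by ring
  linarith

lemma proj_residual_le {n : ℕ} (P : Matrix (Fin n) (Fin n) ℝ) (hsym : Pᵀ = P)
    (hidem : P * P = P) (v : Fin n → ℝ) : vnorm (v - P.mulVec v) ≤ vnorm v := by
  apply vnorm_le_of_sq_le
  have key := proj_key P hsym hidem v
  have hpos : (0:ℝ) ≤ ∑ i, P.mulVec v i * P.mulVec v i :=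
    Finset.sum_nonneg fun i _ => mul_self_nonneg _
  have hexp := sum_sq_expand v (P.mulVec v)
  have hpt : ∑ i, ((v - P.mulVec v) i) ^ 2 = ∑ i, (v i - P.mulVec v i) ^ 2 := by
    exact Finset.sum_congr rfl fun i _ => by simp
  linarith

lemma firstCols_orth {m p : ℕ} (U : Matrix (Fin m) (Fin p) ℝ) (hU : Uᵀ * U = 1) {k : ℕ}
    (h : k ≤ p) : (firstCols U k h)ᵀ * firstCols U k h = 1 := by
  ext i j
  have hent := congrFun (congrFun hU (Fin.castLE h i)) (Fin.castLE h j)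
  simp only [Matrix.mul_apply, Matrix.transpose_apply, Matrix.one_apply] at hent ⊢
  simp only [firstCols, Matrix.submatrix_apply, id]
  rw [hent]
  simp [Fin.castLE_inj]

lemma isMP_orth {m k : ℕ} (U : Matrix (Fin m) (Fin k) ℝ) (hU : Uᵀ * U = 1) : IsMP U Uᵀ := by
  refine ⟨?_, ?_, ?_, ?_⟩
  · rw [Matrix.mul_assoc, hU, Matrix.mul_one]
  · rw [hU, Matrix.one_mul]
  · rw [Matrix.transpose_mul, Matrix.transpose_transpose]
  · rw [hU, Matrix.transpose_one]

lemma absorb {m n r : ℕ} {A : Matrix (Fin m) (Fin n) ℝ} {Y : Matrix (Fin n) (Fin m) ℝ}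
    (h : IsMP A Y) (Z : Matrix (Fin n) (Fin r) ℝ) : (A * Z)ᵀ * (A * Y) = (A * Z)ᵀ := by
  obtain ⟨h1, _, h3, _⟩ := h
  calc (A * Z)ᵀ * (A * Y) = Zᵀ * (Aᵀ * (A * Y)) := by
        rw [Matrix.transpose_mul, Matrix.mul_assoc]
  _ = Zᵀ * (Aᵀ * (A * Y)ᵀ) := by rw [h3]
  _ = Zᵀ * ((A * Y) * A)ᵀ := by rw [← Matrix.transpose_mul]
  _ = Zᵀ * Aᵀ := by rw [h1]
  _ = (A * Z)ᵀ := by rw [← Matrix.transpose_mul]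

noncomputable def sel (p k : ℕ) (h : k ≤ p) : Matrix (Fin p) (Fin k) ℝ :=
  (1 : Matrix (Fin p) (Fin p) ℝ).submatrix id (Fin.castLE h)

lemma mul_sel {m p k : ℕ} (M : Matrix (Fin m) (Fin p) ℝ) (h : k ≤ p) :
    M * sel p k h = firstCols M k h := by
  ext i j
  simp [sel, firstCols, Matrix.mul_apply, Matrix.one_apply]

lemma diagonal_sel {p k : ℕ} (h : k ≤ p) (s : Fin p → ℝ) :
    Matrix.diagonal s * sel p k h
      = sel p k h * Matrix.diagonal (fun j : Fin k => s (Fin.castLE h j)) := by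
  ext i j
  rw [Matrix.diagonal_mul, Matrix.mul_diagonal]
  simp only [sel, Matrix.submatrix_apply, id, Matrix.one_apply]
  split_ifs with hij
  · rw [hij]; ring
  · simp

lemma svd_main {m' n' p k : ℕ} {X : Matrix (Fin m') (Fin n') ℝ}
    {U : Matrix (Fin m') (Fin p) ℝ} {s : Fin p → ℝ} {V : Matrix (Fin n') (Fin p) ℝ}
    (hsvd : IsThinSVD X U s V) (h : k ≤ p)
    (hpos : ∀ j : Fin k, s (Fin.castLE h j) ≠ 0) :
    projCol (X * firstCols V k h) = firstCols U k h * (firstCols U k h)ᵀ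
    ∧ ∃ Z : Matrix (Fin n') (Fin k) ℝ, firstCols U k h = X * Z := by
  obtain ⟨hU, hV, _, _, hX⟩ := hsvd
  set Uk := firstCols U k h with hUk
  set Vk := firstCols V k h with hVk
  set Dk := Matrix.diagonal (fun j : Fin k => s (Fin.castLE h j)) with hDk
  set Dk' := Matrix.diagonal (fun j : Fin k => (s (Fin.castLE h j))⁻¹) with hDk'
  have hDD' : Dk * Dk' = 1 := by
    rw [hDk, hDk', Matrix.diagonal_mul_diagonal]
    rw [show (fun j : Fin k => s (Fin.castLE h j) * (s (Fin.castLE h j))⁻¹) = fun _ => (1:ℝ)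
      from funext fun j => mul_inv_cancel₀ (hpos j), Matrix.diagonal_one]
  have hD'D : Dk' * Dk = 1 := by
    rw [hDk, hDk', Matrix.diagonal_mul_diagonal]
    rw [show (fun j : Fin k => (s (Fin.castLE h j))⁻¹ * s (Fin.castLE h j)) = fun _ => (1:ℝ)
      from funext fun j => inv_mul_cancel₀ (hpos j), Matrix.diagonal_one]
  have h1 : X * Vk = Uk * Dk := by
    rw [hVk, ← mul_sel V h, hX]
    rw [Matrix.mul_assoc (U * Matrix.diagonal s) Vᵀ (V * sel p k h),
      ← Matrix.mul_assoc Vᵀ V (sel p k h), hV, Matrix.one_mul,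
      Matrix.mul_assoc U (Matrix.diagonal s) (sel p k h), diagonal_sel,
      ← Matrix.mul_assoc, mul_sel]
  have hUkU : Ukᵀ * Uk = 1 := firstCols_orth U hU h
  have hXY : Uk * Dk * (Dk' * Ukᵀ) = Uk * Ukᵀ := by
    rw [Matrix.mul_assoc Uk Dk (Dk' * Ukᵀ), ← Matrix.mul_assoc Dk Dk' Ukᵀ, hDD',
      Matrix.one_mul]
  have hYX : (Dk' * Ukᵀ) * (Uk * Dk) = 1 := by
    rw [Matrix.mul_assoc Dk' Ukᵀ (Uk * Dk), ← Matrix.mul_assoc Ukᵀ Uk Dk, hUkU,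
      Matrix.one_mul, hD'D]
  have hmp : IsMP (Uk * Dk) (Dk' * Ukᵀ) := by
    refine ⟨?_, ?_, ?_, ?_⟩
    · rw [hXY, Matrix.mul_assoc Uk Ukᵀ (Uk * Dk), ← Matrix.mul_assoc Ukᵀ Uk Dk, hUkU,
        Matrix.one_mul]
    · rw [Matrix.mul_assoc (Dk' * Ukᵀ) (Uk * Dk) (Dk' * Ukᵀ)]
      rw [show (Uk * Dk) * (Dk' * Ukᵀ) = Uk * Ukᵀ from hXY]
      rw [Matrix.mul_assoc Dk' Ukᵀ (Uk * Ukᵀ), ← Matrix.mul_assoc Ukᵀ Uk Ukᵀ, hUkU,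
        Matrix.one_mul]
    · rw [hXY, Matrix.transpose_mul, Matrix.transpose_transpose]
    · rw [hYX, Matrix.transpose_one]
  constructor
  · rw [h1, projCol, pinv_eq hmp, hXY]
  · refine ⟨Vk * Dk', ?_⟩
    rw [← Matrix.mul_assoc, h1, Matrix.mul_assoc, hDD', Matrix.mul_one]

lemma svd_pinvMP {m' n' p : ℕ} {X : Matrix (Fin m') (Fin n') ℝ}
    {U : Matrix (Fin m') (Fin p) ℝ} {s : Fin p → ℝ} {V : Matrix (Fin n') (Fin p) ℝ}
    (hsvd : IsThinSVD X U s V) :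
    IsMP X (V * Matrix.diagonal (fun i => (s i)⁻¹) * Uᵀ) := by
  obtain ⟨hU, hV, _, _, hX⟩ := hsvd
  have hUc : ∀ {r : ℕ} (W : Matrix (Fin p) (Fin r) ℝ), Uᵀ * (U * W) = W := fun W => by
    rw [← Matrix.mul_assoc, hU, Matrix.one_mul]
  have hVc : ∀ {r : ℕ} (W : Matrix (Fin p) (Fin r) ℝ), Vᵀ * (V * W) = W := fun W => by
    rw [← Matrix.mul_assoc, hV, Matrix.one_mul]
  set D := Matrix.diagonal s with hD
  set D' := Matrix.diagonal (fun i => (s i)⁻¹) with hD'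
  have hDD'D : D * D' * D = D := by
    rw [hD, hD', Matrix.diagonal_mul_diagonal, Matrix.diagonal_mul_diagonal]
    refine congrArg Matrix.diagonal (funext fun i => ?_)
    rcases eq_or_ne (s i) 0 with h0 | h0
    · rw [h0]; simp
    · field_simp
  have hD'DD' : D' * D * D' = D' := by
    rw [hD, hD', Matrix.diagonal_mul_diagonal, Matrix.diagonal_mul_diagonal]
    refine congrArg Matrix.diagonal (funext fun i => ?_)
    rcases eq_or_ne (s i) 0 with h0 | h0
    · rw [h0]; simp
    · field_simp
  rw [hX]
  refine ⟨?_, ?_, ?_, ?_⟩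
  · simp only [Matrix.mul_assoc]
    rw [hVc, hUc, ← Matrix.mul_assoc D D', ← Matrix.mul_assoc (D * D') D, hDD'D]
  · simp only [Matrix.mul_assoc]
    rw [hUc, hVc, ← Matrix.mul_assoc D' D, ← Matrix.mul_assoc (D' * D) D', hD'DD']
  · simp only [Matrix.mul_assoc]
    rw [hVc]
    rw [← Matrix.mul_assoc D D' Uᵀ, ← Matrix.mul_assoc U (D * D') Uᵀ]
    rw [Matrix.transpose_mul, Matrix.transpose_mul, Matrix.transpose_transpose]
    rw [hD, hD', Matrix.diagonal_mul_diagonal, Matrix.diagonal_transpose, Matrix.mul_assoc]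
  · simp only [Matrix.mul_assoc]
    rw [hUc]
    rw [← Matrix.mul_assoc D' D Vᵀ, ← Matrix.mul_assoc V (D' * D) Vᵀ]
    rw [Matrix.transpose_mul, Matrix.transpose_mul, Matrix.transpose_transpose]
    rw [hD, hD', Matrix.diagonal_mul_diagonal, Matrix.diagonal_transpose, Matrix.mul_assoc]

lemma svd_pos {m' n' p k : ℕ} {X : Matrix (Fin m') (Fin n') ℝ}
    {U : Matrix (Fin m') (Fin p) ℝ} {s : Fin p → ℝ} {V : Matrix (Fin n') (Fin p) ℝ}
    (hsvd : IsThinSVD X U s V) (h : k ≤ p) (hrank : k ≤ X.rank) :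
    ∀ j : Fin k, s (Fin.castLE h j) ≠ 0 := by
  classical
  intro j hzero
  obtain ⟨hU, hV, hanti, hnn, hX⟩ := hsvd
  have hsub : ∀ l : Fin p, s l ≠ 0 → (l : ℕ) < (j : ℕ) := by
    intro l hl
    by_contra hge
    push_neg at hge
    have hle : Fin.castLE h j ≤ l := by
      rw [Fin.le_def]
      simpa using hge
    exact hl (le_antisymm (hzero ▸ hanti hle) (hnn l))
  have hcard : Fintype.card {l : Fin p // s l ≠ 0} ≤ (j : ℕ) := by
    have hinj : Function.Injective
        (fun l : {l : Fin p // s l ≠ 0} => (⟨l.1.1, hsub l.1 l.2⟩ : Fin (j : ℕ))) := by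
      intro a b hab
      apply Subtype.ext
      apply Fin.ext
      simpa using congrArg Fin.val hab
    simpa using Fintype.card_le_of_injective _ hinj
  have hr1 : X.rank ≤ Fintype.card {l : Fin p // s l ≠ 0} := by
    rw [hX]
    refine le_trans (Matrix.rank_mul_le_left _ _) ?_
    refine le_trans (Matrix.rank_mul_le_right _ _) ?_
    rw [Matrix.rank_diagonal]
  have : (j : ℕ) < k := j.2
  omega

lemma frob_proj {n k : ℕ} (U : Matrix (Fin n) (Fin k) ℝ) (hU : Uᵀ * U = 1) :
    ∑ i, ∑ j, ((U * Uᵀ) i j) ^ 2 = (k : ℝ) := by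
  have h1 : ∑ i, ∑ j, ((U * Uᵀ) i j) ^ 2 = Matrix.trace ((U * Uᵀ) * (U * Uᵀ)ᵀ) := by
    simp only [Matrix.trace, Matrix.diag, Matrix.mul_apply, Matrix.transpose_apply, sq]
  rw [h1, Matrix.transpose_mul, Matrix.transpose_transpose]
  rw [Matrix.mul_assoc U Uᵀ (U * Uᵀ), ← Matrix.mul_assoc Uᵀ U Uᵀ, hU, Matrix.one_mul]
  rw [Matrix.trace_mul_comm, hU, Matrix.trace_one]
  simp

open ProbabilityTheory in
lemma integral_noise {n : ℕ} {Ω : Type} [MeasurableSpace Ω] (μ : Measure Ω)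
    [IsProbabilityMeasure μ] (ξ : Ω → Fin n → ℝ)
    (hmeas : ∀ i, Measurable fun ω => ξ ω i)
    (hL2 : ∀ i, MemLp (fun ω => ξ ω i) 2 μ)
    (hindep : iIndepFun (fun i ω => ξ ω i) μ)
    (sig2 : ℝ) (hmean : ∀ i, ∫ ω, ξ ω i ∂μ = 0)
    (hvar : ∀ i, ∫ ω, (ξ ω i) ^ 2 ∂μ = sig2)
    (M : Matrix (Fin n) (Fin n) ℝ) (w : Fin n → ℝ) :
    ∫ ω, vnorm (w + M.mulVec (ξ ω)) ^ 2 ∂μ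
      = vnorm w ^ 2 + (∑ i, ∑ j, (M i j) ^ 2) * sig2 := by
  classical
  have hint1 : ∀ j, Integrable (fun ω => ξ ω j) μ := fun j => (hL2 j).integrable one_le_two
  have hintmul : ∀ j l, Integrable (fun ω => ξ ω j * ξ ω l) μ := by
    intro j l
    have hsq_j := (hL2 j).integrable_sq
    have hsq_l := (hL2 l).integrable_sq
    refine ((hsq_j.add hsq_l).const_mul (1/2 : ℝ)).mono' ?_ ?_
    · exact ((hmeas j).mul (hmeas l)).aestronglyMeasurable
    · refine Filter.Eventually.of_forall fun ω => ?_
      have h2 : |ξ ω j| * |ξ ω l| ≤ 1/2 * ((ξ ω j)^2 + (ξ ω l)^2) := by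
        nlinarith [sq_nonneg (|ξ ω j| - |ξ ω l|), sq_abs (ξ ω j), sq_abs (ξ ω l),
          abs_nonneg (ξ ω j), abs_nonneg (ξ ω l)]
      calc ‖ξ ω j * ξ ω l‖ = |ξ ω j| * |ξ ω l| := abs_mul _ _
      _ ≤ 1/2 * ((ξ ω j)^2 + (ξ ω l)^2) := h2
  have hcross : ∀ j l, ∫ ω, ξ ω j * ξ ω l ∂μ = if j = l then sig2 else 0 := by
    intro j l
    by_cases hjl : j = l
    · subst hjl
      rw [if_pos rfl, ← hvar j]
      congr 1
      funext ω
      ring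
    · rw [if_neg hjl]
      have hind := hindep.indepFun (show j ≠ l from hjl)
      have hmul := hind.integral_mul_eq_mul_integral (hint1 j).1 (hint1 l).1
      have heq : ∫ ω, ξ ω j * ξ ω l ∂μ
          = (∫ ω, ξ ω j ∂μ) * ∫ ω, ξ ω l ∂μ := by simpa [Pi.mul_apply] using hmul
      rw [heq, hmean j, hmean l, mul_zero]
  have hpt : ∀ ω, vnorm (w + M.mulVec (ξ ω)) ^ 2
      = (∑ i, w i ^ 2) + (2 * (∑ j, (∑ i, w i * M i j) * ξ ω j)
        + ∑ i, ∑ j, ∑ l, (M i j * M i l) * (ξ ω j * ξ ω l)) := by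
    intro ω
    rw [vnorm_sq]
    have humv : ∀ i, (w + M.mulVec (ξ ω)) i = w i + ∑ j, M i j * ξ ω j := by
      intro i
      simp [Matrix.mulVec, dotProduct]
    have eB : ∑ i, (2 * ∑ j, (w i * M i j) * ξ ω j)
        = 2 * ∑ j, (∑ i, w i * M i j) * ξ ω j := by
      rw [← Finset.mul_sum, Finset.sum_comm]
      congr 1
      exact Finset.sum_congr rfl fun j _ => (Finset.sum_mul _ _ _).symm
    calc ∑ i, ((w + M.mulVec (ξ ω)) i) ^ 2
        = ∑ i, (w i ^ 2 + 2 * (∑ j, (w i * M i j) * ξ ω j)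
            + ∑ j, ∑ l, (M i j * M i l) * (ξ ω j * ξ ω l)) := by
          refine Finset.sum_congr rfl fun i _ => ?_
          rw [humv i]
          have e1 : (∑ j, M i j * ξ ω j) ^ 2
              = ∑ j, ∑ l, (M i j * M i l) * (ξ ω j * ξ ω l) := by
            rw [pow_two, Finset.sum_mul_sum]
            exact Finset.sum_congr rfl fun j _ =>
              Finset.sum_congr rfl fun l _ => by ring
          have e2 : 2 * w i * (∑ j, M i j * ξ ω j)
              = 2 * ∑ j, (w i * M i j) * ξ ω j := by
            rw [Finset.mul_sum, Finset.mul_sum]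
            exact Finset.sum_congr rfl fun j _ => by ring
          rw [add_sq, e1, e2]
    _ = (∑ i, w i ^ 2) + (2 * (∑ j, (∑ i, w i * M i j) * ξ ω j)
        + ∑ i, ∑ j, ∑ l, (M i j * M i l) * (ξ ω j * ξ ω l)) := by
          rw [Finset.sum_add_distrib, Finset.sum_add_distrib, add_assoc, eB]
  have hintL : Integrable (fun ω => ∑ j, (∑ i, w i * M i j) * ξ ω j) μ :=
    integrable_finset_sum _ fun j _ => (hint1 j).const_mul _
  have hintS : Integrable
      (fun ω => ∑ i, ∑ j, ∑ l, (M i j * M i l) * (ξ ω j * ξ ω l)) μ :=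
    integrable_finset_sum _ fun i _ => integrable_finset_sum _ fun j _ =>
      integrable_finset_sum _ fun l _ => (hintmul j l).const_mul _
  have hL0 : ∫ ω, (∑ j, (∑ i, w i * M i j) * ξ ω j) ∂μ = 0 := by
    rw [integral_finset_sum _ fun j _ => (hint1 j).const_mul _]
    simp [integral_const_mul, hmean]
  have hS : ∫ ω, (∑ i, ∑ j, ∑ l, (M i j * M i l) * (ξ ω j * ξ ω l)) ∂μ
      = (∑ i, ∑ j, (M i j) ^ 2) * sig2 := by
    rw [integral_finset_sum _ fun i _ => integrable_finset_sum _ fun j _ =>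
      integrable_finset_sum _ fun l _ => (hintmul j l).const_mul _]
    have hone : ∀ i : Fin n, ∫ ω, (∑ j, ∑ l, (M i j * M i l) * (ξ ω j * ξ ω l)) ∂μ
        = ∑ j, (M i j) ^ 2 * sig2 := by
      intro i
      rw [integral_finset_sum _ fun j _ => integrable_finset_sum _ fun l _ =>
        (hintmul j l).const_mul _]
      refine Finset.sum_congr rfl fun j _ => ?_
      rw [integral_finset_sum _ fun l _ => (hintmul j l).const_mul _]
      have hl : ∀ l, ∫ ω, (M i j * M i l) * (ξ ω j * ξ ω l) ∂μ
          = (M i j * M i l) * (if j = l then sig2 else 0) := by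
        intro l
        rw [integral_const_mul, hcross j l]
      calc ∑ l, ∫ ω, (M i j * M i l) * (ξ ω j * ξ ω l) ∂μ
          = ∑ l, (M i j * M i l) * (if j = l then sig2 else 0) :=
            Finset.sum_congr rfl fun l _ => hl l
      _ = (M i j) ^ 2 * sig2 := by
          rw [Finset.sum_eq_single j]
          · rw [if_pos rfl]; ring
          · intro b _ hb
            rw [if_neg (Ne.symm hb), mul_zero]
          · intro hj
            exact absurd (Finset.mem_univ j) hj
    calc ∑ i, ∫ ω, (∑ j, ∑ l, (M i j * M i l) * (ξ ω j * ξ ω l)) ∂μ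
        = ∑ i, ∑ j, (M i j) ^ 2 * sig2 := Finset.sum_congr rfl fun i _ => hone i
    _ = (∑ i, ∑ j, (M i j) ^ 2) * sig2 := by
        rw [Finset.sum_mul]
        exact Finset.sum_congr rfl fun i _ => (Finset.sum_mul _ _ _).symm
  calc ∫ ω, vnorm (w + M.mulVec (ξ ω)) ^ 2 ∂μ
      = ∫ ω, ((∑ i, w i ^ 2) + (2 * (∑ j, (∑ i, w i * M i j) * ξ ω j)
        + ∑ i, ∑ j, ∑ l, (M i j * M i l) * (ξ ω j * ξ ω l))) ∂μ := by
        exact integral_congr_ae (Filter.Eventually.of_forall fun ω => hpt ω)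
  _ = (∑ i, w i ^ 2) + (2 * (∫ ω, (∑ j, (∑ i, w i * M i j) * ξ ω j) ∂μ)
        + ∫ ω, (∑ i, ∑ j, ∑ l, (M i j * M i l) * (ξ ω j * ξ ω l)) ∂μ) := by
        have hintL2 : Integrable (fun ω => 2 * ∑ j, (∑ i, w i * M i j) * ξ ω j) μ := by
          exact hintL.const_mul 2
        have hg : Integrable (fun ω => 2 * (∑ j, (∑ i, w i * M i j) * ξ ω j)
            + ∑ i, ∑ j, ∑ l, (M i j * M i l) * (ξ ω j * ξ ω l)) μ := by
          exact hintL2.add hintS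
        rw [integral_add (integrable_const _) hg, integral_add hintL2 hintS,
          integral_const_mul, integral_const]
        simp [measure_univ]
  _ = vnorm w ^ 2 + (∑ i, ∑ j, (M i j) ^ 2) * sig2 := by
        rw [hL0, hS, vnorm_sq]
        ring

lemma vnorm_sub_comm {n : ℕ} (u v : Fin n → ℝ) : vnorm (u - v) = vnorm (v - u) := by
  unfold vnorm
  congr 1
  refine Finset.sum_congr rfl fun i _ => ?_
  simp only [Pi.sub_apply]
  ring

open ProbabilityTheory in
theorem statement9
    {n d s k : ℕ} (hk0 : 0 < k)
    (A : Matrix (Fin n) (Fin d) ℝ)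
    (UA : Matrix (Fin n) (Fin (min n d)) ℝ) (sA : Fin (min n d) → ℝ)
    (VA : Matrix (Fin d) (Fin (min n d)) ℝ)
    (hSVD : IsThinSVD A UA sA VA)
    (hkrank : k ≤ A.rank) (hkp : k ≤ min n d)
    (hgap : sv sA (k + 1) < sv sA k)
    (hks : k ≤ s) (R : Matrix (Fin d) (Fin s) ℝ)
    (hkrankAR : k ≤ (A * R).rank) (hkq : k ≤ min n s)
    (UR : Matrix (Fin n) (Fin (min n s)) ℝ) (sR : Fin (min n s) → ℝ)
    (VR : Matrix (Fin s) (Fin (min n s)) ℝ)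
    (hSVDR : IsThinSVD (A * R) UR sR VR)
    (ν : ℝ) (hν1 : ν < 1)
    (hdist : d2 (firstCols UR k hkq) (firstCols UA k hkp) ≤ ν)
    -- the fixed-design statistical model
    {Ω : Type} [MeasurableSpace Ω] (μ : Measure Ω) [IsProbabilityMeasure μ]
    (ξ : Ω → Fin n → ℝ)
    (hmeas : ∀ i, Measurable fun ω => ξ ω i)
    (hL2 : ∀ i, MemLp (fun ω => ξ ω i) 2 μ)
    (hindep : iIndepFun (fun i ω => ξ ω i) μ)
    (sig2 : ℝ)
    (hmean : ∀ i, ∫ ω, ξ ω i ∂μ = 0)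
    (hvar : ∀ i, ∫ ω, (ξ ω i) ^ 2 ∂μ = sig2)
    (f : Fin n → ℝ) (xstar : Fin d → ℝ)
    (hxstar : A.mulVec xstar = (projCol A).mulVec f) :
    (∫ ω, vnorm (A.mulVec ((R * firstCols VR k hkq *
          pinv (A * R * firstCols VR k hkq)).mulVec (f + ξ ω))
        - A.mulVec xstar) ^ 2 ∂μ) / (n : ℝ)
      ≤ (∫ ω, vnorm (A.mulVec ((firstCols VA k hkp *
            pinv (A * firstCols VA k hkp)).mulVec (f + ξ ω))
          - A.mulVec xstar) ^ 2 ∂μ) / (n : ℝ)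
        + (2 * ν + ν ^ 2) * vnorm f ^ 2 / (n : ℝ) := by
  classical
  have hposA : ∀ j : Fin k, sA (Fin.castLE hkp j) ≠ 0 := svd_pos hSVD hkp hkrank
  have hposR : ∀ j : Fin k, sR (Fin.castLE hkq j) ≠ 0 := svd_pos hSVDR hkq hkrankAR
  obtain ⟨hprojA, ZA, hUAk⟩ := svd_main hSVD hkp hposA
  obtain ⟨hprojR, ZR, hURk⟩ := svd_main hSVDR hkq hposR
  set UAk := firstCols UA k hkp with hUAkdef
  set URk := firstCols UR k hkq with hURkdef
  set P := UAk * UAkᵀ with hPdef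
  set Q := URk * URkᵀ with hQdef
  set g := (projCol A).mulVec f with hgdef
  -- Moore-Penrose inverse of A
  have hmpA := svd_pinvMP hSVD
  have hApinv : IsMP A (pinv A) := by rw [pinv_eq hmpA]; exact hmpA
  have hPAsym : (projCol A)ᵀ = projCol A := hApinv.2.2.1
  have hPAidem : projCol A * projCol A = projCol A := by
    show (A * pinv A) * (A * pinv A) = A * pinv A
    rw [← Matrix.mul_assoc, hApinv.1]
  -- orthonormality of column blocks
  have hUAorth : UAkᵀ * UAk = 1 := firstCols_orth UA hSVD.1 hkp
  have hURorth : URkᵀ * URk = 1 := firstCols_orth UR hSVDR.1 hkq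
  have hPsym : Pᵀ = P := by
    rw [hPdef, Matrix.transpose_mul, Matrix.transpose_transpose]
  have hPidem : P * P = P := by
    rw [hPdef, Matrix.mul_assoc, ← Matrix.mul_assoc UAkᵀ UAk UAkᵀ, hUAorth, Matrix.one_mul]
  have hURk' : URk = A * (R * ZR) := by rw [hURk, Matrix.mul_assoc]
  -- absorption into the projection onto the column space of A
  have hP_PA : P * projCol A = P := by
    show P * (A * pinv A) = P
    rw [hPdef, Matrix.mul_assoc, hUAk, absorb hApinv ZA]
  have hQ_PA : Q * projCol A = Q := by
    show Q * (A * pinv A) = Q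
    rw [hQdef, Matrix.mul_assoc, hURk', absorb hApinv (R * ZR)]
  -- the two prediction matrices
  have hQmat : A * (R * firstCols VR k hkq * pinv (A * R * firstCols VR k hkq)) = Q := by
    rw [← Matrix.mul_assoc A (R * firstCols VR k hkq) _, ← Matrix.mul_assoc A R _]
    exact hprojR
  have hPmat : A * (firstCols VA k hkp * pinv (A * firstCols VA k hkp)) = P := by
    rw [← Matrix.mul_assoc]
    exact hprojA
  -- pointwise rewriting of the integrands
  have hQfun : ∀ ω, A.mulVec ((R * firstCols VR k hkq *
        pinv (A * R * firstCols VR k hkq)).mulVec (f + ξ ω)) - A.mulVec xstar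
      = (Q.mulVec f - g) + Q.mulVec (ξ ω) := by
    intro ω
    rw [hxstar, Matrix.mulVec_mulVec, hQmat, Matrix.mulVec_add]
    abel
  have hPfun : ∀ ω, A.mulVec ((firstCols VA k hkp *
        pinv (A * firstCols VA k hkp)).mulVec (f + ξ ω)) - A.mulVec xstar
      = (P.mulVec f - g) + P.mulVec (ξ ω) := by
    intro ω
    rw [hxstar, Matrix.mulVec_mulVec, hPmat, Matrix.mulVec_add]
    abel
  -- P f = P g and Q f = Q g
  have hQfg : Q.mulVec f = Q.mulVec g := by
    rw [hgdef, Matrix.mulVec_mulVec, hQ_PA]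
  have hPfg : P.mulVec f = P.mulVec g := by
    rw [hgdef, Matrix.mulVec_mulVec, hP_PA]
  -- the two integrals
  have hIQ : (∫ ω, vnorm (A.mulVec ((R * firstCols VR k hkq *
        pinv (A * R * firstCols VR k hkq)).mulVec (f + ξ ω)) - A.mulVec xstar) ^ 2 ∂μ)
      = vnorm (Q.mulVec g - g) ^ 2 + (k : ℝ) * sig2 := by
    have hfun : (fun ω => vnorm (A.mulVec ((R * firstCols VR k hkq *
          pinv (A * R * firstCols VR k hkq)).mulVec (f + ξ ω)) - A.mulVec xstar) ^ 2)
        = fun ω => vnorm ((Q.mulVec f - g) + Q.mulVec (ξ ω)) ^ 2 :=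
      funext fun ω => by rw [hQfun ω]
    rw [hfun, integral_noise μ ξ hmeas hL2 hindep sig2 hmean hvar Q (Q.mulVec f - g),
      hQdef, frob_proj URk hURorth, hQfg]
  have hIP : (∫ ω, vnorm (A.mulVec ((firstCols VA k hkp *
        pinv (A * firstCols VA k hkp)).mulVec (f + ξ ω)) - A.mulVec xstar) ^ 2 ∂μ)
      = vnorm (P.mulVec g - g) ^ 2 + (k : ℝ) * sig2 := by
    have hfun : (fun ω => vnorm (A.mulVec ((firstCols VA k hkp *
          pinv (A * firstCols VA k hkp)).mulVec (f + ξ ω)) - A.mulVec xstar) ^ 2)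
        = fun ω => vnorm ((P.mulVec f - g) + P.mulVec (ξ ω)) ^ 2 :=
      funext fun ω => by rw [hPfun ω]
    rw [hfun, integral_noise μ ξ hmeas hL2 hindep sig2 hmean hvar P (P.mulVec f - g),
      hPdef, frob_proj UAk hUAorth, hPfg]
  -- spectral bound
  have hprojcolR : projCol URk = Q := by
    rw [projCol, pinv_eq (isMP_orth URk hURorth), hQdef]
  have hprojcolP : projCol UAk = P := by
    rw [projCol, pinv_eq (isMP_orth UAk hUAorth), hPdef]
  have hspec : spec (Q - P) ≤ ν := by
    unfold d2 at hdist
    rw [hprojcolR, hprojcolP] at hdist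
    exact hdist
  have hν0 : 0 ≤ ν := le_trans (spec_nonneg _) hspec
  -- deterministic core inequality
  have htri : vnorm (Q.mulVec g - g) ≤ vnorm (P.mulVec g - g) + ν * vnorm g := by
    have hsplit : Q.mulVec g - g = (P.mulVec g - g) + (Q - P).mulVec g := by
      rw [Matrix.sub_mulVec]
      abel
    rw [hsplit]
    refine le_trans (vnorm_add_le _ _) (add_le_add le_rfl ?_)
    exact le_trans (vnorm_mulVec_le _ _)
      (mul_le_mul_of_nonneg_right hspec (vnorm_nonneg g))
  have hb : vnorm (P.mulVec g - g) ≤ vnorm g := by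
    rw [vnorm_sub_comm]
    exact proj_residual_le P hPsym hPidem g
  have hc : vnorm g ≤ vnorm f := by
    rw [hgdef]
    exact proj_mulVec_le (projCol A) hPAsym hPAidem f
  have core : vnorm (Q.mulVec g - g) ^ 2
      ≤ vnorm (P.mulVec g - g) ^ 2 + (2 * ν + ν ^ 2) * vnorm f ^ 2 := by
    have hsq := pow_le_pow_left₀ (vnorm_nonneg (Q.mulVec g - g)) htri 2
    have hcF : vnorm g * vnorm g ≤ vnorm f * vnorm f :=
      mul_le_mul hc hc (vnorm_nonneg g) (vnorm_nonneg f)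
    have hbc : vnorm (P.mulVec g - g) * vnorm g ≤ vnorm g * vnorm g :=
      mul_le_mul_of_nonneg_right hb (vnorm_nonneg g)
    have expand : (vnorm (P.mulVec g - g) + ν * vnorm g) ^ 2
        = vnorm (P.mulVec g - g) ^ 2 + 2 * ν * (vnorm (P.mulVec g - g) * vnorm g)
          + ν ^ 2 * (vnorm g * vnorm g) := by ring
    have h1 : 2 * ν * (vnorm (P.mulVec g - g) * vnorm g) ≤ 2 * ν * (vnorm g * vnorm g) :=
      mul_le_mul_of_nonneg_left hbc (by linarith)
    have h2 : 2 * ν * (vnorm g * vnorm g) ≤ 2 * ν * (vnorm f * vnorm f) :=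
      mul_le_mul_of_nonneg_left hcF (by linarith)
    have h3 : ν ^ 2 * (vnorm g * vnorm g) ≤ ν ^ 2 * (vnorm f * vnorm f) :=
      mul_le_mul_of_nonneg_left hcF (sq_nonneg ν)
    have hfinal : (2 * ν + ν ^ 2) * vnorm f ^ 2
        = 2 * ν * (vnorm f * vnorm f) + ν ^ 2 * (vnorm f * vnorm f) := by ring
    linarith [hsq, expand, h1, h2, h3, hfinal]
  -- conclusion
  rw [hIQ, hIP, ← add_div]
  rcases Nat.eq_zero_or_pos n with hn | hn
  · have hzero : ((n : ℕ) : ℝ) = 0 := by rw [hn]; simp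
    rw [hzero, div_zero, div_zero]
  · have hnpos : (0 : ℝ) < (n : ℝ) := by positivity
    refine (div_le_div_iff_of_pos_right hnpos).mpr ?_
    linarith [core]
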